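/- Let Ω be an infinite set. Then every countable subset of Ω^Ω is contained in a 2-generated subsemigroup of Ω^Ω; that is, for every countable set A of functions from Ω to Ω there exist functions f, g : Ω → Ω such that every element of A belongs to the subsemigroup of Ω^Ω generated by {f, g}. -/

import Mathlib

open Cardinal

section Aux

variable {Ω : Type*}

/-- The two generators, built from an equivalence `E : Ω × ℕ ≃ Ω` and a sequence `a`. -/
noncomputable def sierpF (E : Ω × ℕ ≃ Ω) (a : ℕ → Ω → Ω) : Ω → Ω := fun z =>
  match E.symm z with
  | (u, 0) =>
    match E.symm u with
    | (_, 0) => E (u, 1)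
    | (w, m+1) =>
      match E.symm w with
      | (y, 0) => a m y
      | _ => z
  | (u, j+1) =>
    match E.symm u with
    | (_, 0) => E (u, j+2)
    | _ => z

def sierpG (E : Ω × ℕ ≃ Ω) : Ω → Ω := fun z => E (z, 0)

lemma sierpF_iter (E : Ω × ℕ ≃ Ω) (a : ℕ → Ω → Ω) (y : Ω) :
    ∀ k, (sierpF E a)^[k] (E (E (y, 0), 0)) = E (E (y, 0), k) := by
  intro k
  induction k with
  | zero => simp
  | succ k ih =>
    rw [Function.iterate_succ_apply', ih]
    cases k with
    | zero => simp [sierpF]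
    | succ j => simp [sierpF]

lemma sierp_word (E : Ω × ℕ ≃ Ω) (a : ℕ → Ω → Ω) (n : ℕ) (y : Ω) :
    sierpF E a (sierpG E ((sierpF E a)^[n+1] (sierpG E (sierpG E y)))) = a n y := by
  have h1 : sierpG E (sierpG E y) = E (E (y, 0), 0) := rfl
  rw [h1, sierpF_iter]
  simp [sierpG, sierpF]

end Aux

/-- Sierpiński's theorem: every countable set of functions from an infinite set `Ω` to itself
is contained in a 2-generated subsemigroup of the semigroup `Ω^Ω` of all self-maps of `Ω`
under composition. -/
theorem countable_subset_of_two_generated_subsemigroup_of_functionEnd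
    (Ω : Type*) [Infinite Ω] (A : Set (Function.End Ω)) (hA : A.Countable) :
    ∃ f g : Function.End Ω,
      A ⊆ (Subsemigroup.closure {f, g} : Subsemigroup (Function.End Ω)) := by
  rcases A.eq_empty_or_nonempty with rfl | hne
  · exact ⟨id, id, by simp⟩
  obtain ⟨a, rfl⟩ := hA.exists_eq_range hne
  have hE : Nonempty (Ω × ℕ ≃ Ω) := by
    rw [← Cardinal.eq]
    simp [Cardinal.mk_mul_aleph0_eq]
  obtain ⟨E⟩ := hE
  let F : Function.End Ω := sierpF E a
  let G : Function.End Ω := sierpG E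
  have hFpow : ∀ (k : ℕ) (y : Ω), (F ^ k) y = (sierpF E a)^[k] y := by
    intro k
    induction k with
    | zero => intro y; rfl
    | succ k ih =>
      intro y
      rw [Function.iterate_succ_apply, pow_succ, Function.End.mul_def]
      exact ih _
  refine ⟨F, G, ?_⟩
  rintro _ ⟨n, rfl⟩
  have key : a n = F * G * F ^ (n + 1) * G * G := by
    funext y
    rw [Function.End.mul_def, Function.End.mul_def, Function.End.mul_def,
      Function.End.mul_def]
    show a n y = F (G ((F ^ (n + 1)) (G (G y))))
    rw [hFpow]
    exact (sierp_word E a n y).symm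
  rw [key]
  have hf : F ∈ Subsemigroup.closure {F, G} := Subsemigroup.subset_closure (by simp)
  have hg : G ∈ Subsemigroup.closure {F, G} := Subsemigroup.subset_closure (by simp)
  have hpow : ∀ k : ℕ, F ^ (k + 1) ∈ Subsemigroup.closure {F, G} := by
    intro k
    induction k with
    | zero => simpa using hf
    | succ k ih => rw [pow_succ]; exact mul_mem ih hf
  exact mul_mem (mul_mem (mul_mem (mul_mem hf hg) (hpow n)) hg) hg
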